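/- The magnetic momentum map Φ_η(X,P) = PXᵀ - XPᵀ + η e1∧e2 is SO(n)-equivariant: for all R ∈ SO(n), Φ_η(RX, RP) = R Φ_η(X,P) Rᵀ. -/

import Mathlib

open Matrix


lemma vmv_conj {n : ℕ} (R : Matrix (Fin n) (Fin n) ℝ) (u v : Fin n → ℝ) :
    vecMulVec (R.mulVec u) (R.mulVec v) = R * vecMulVec u v * Rᵀ := by
  rw [vecMulVec_eq (Fin 1), vecMulVec_eq (Fin 1), replicateCol_mulVec, ← vecMul_transpose, replicateRow_vecMul,
    Matrix.mul_assoc, Matrix.mul_assoc, Matrix.mul_assoc]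

lemma col_mul {n : ℕ} (R : Matrix (Fin n) (Fin n) ℝ) (X : Matrix (Fin n) (Fin 2) ℝ) (j : Fin 2) :
    (fun i => (R * X) i j) = R.mulVec (fun i => X i j) := by
  ext i; simp [Matrix.mul_apply, mulVec, dotProduct]

/-- The magnetic momentum map `Φ_η(X,P) = PXᵀ - XPᵀ + η e₁∧e₂` of the left `SO(n)`-action is
equivariant: `Φ_η(RX, RP) = R Φ_η(X,P) Rᵀ` for every `R ∈ SO(n)`.
Here `e₁, e₂` are the columns of `X` and `x∧y = xyᵀ - yxᵀ`. -/
theorem magnetic_momentum_map_equivariant (n : ℕ) (η : ℝ)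
    (R : Matrix (Fin n) (Fin n) ℝ) (hR : Rᵀ * R = 1) (hRdet : R.det = 1) :
    let Φ : Matrix (Fin n) (Fin 2) ℝ → Matrix (Fin n) (Fin 2) ℝ →
        Matrix (Fin n) (Fin n) ℝ :=
      fun X P => P * Xᵀ - X * Pᵀ +
        η • (vecMulVec (fun i => X i 0) (fun i => X i 1)
              - vecMulVec (fun i => X i 1) (fun i => X i 0))
    ∀ X P : Matrix (Fin n) (Fin 2) ℝ, Φ (R * X) (R * P) = R * Φ X P * Rᵀ := by
  intro Φ X P
  simp only [Φ, col_mul, vmv_conj, transpose_mul]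
  simp only [Matrix.mul_sub, Matrix.sub_mul, Matrix.mul_add, Matrix.add_mul,
    Matrix.mul_smul, Matrix.smul_mul, Matrix.mul_assoc]
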